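/- Let V be a real vector space and T : V⁵ → ℝ a multilinear map with the algebraic symmetries of ∇R such that T(U,V,U,V,U) = 0 for all U, V ∈ V. Then T(U,V,U,V,W) = 0 for all U, V, W ∈ V. -/

import Mathlib

section aux

variable {V : Type*} [AddCommGroup V] [Module ℝ V]

private lemma upd0 (a b c d e x : V) :
    Function.update ![a,b,c,d,e] (0 : Fin 5) x = ![x,b,c,d,e] := by
  funext i; fin_cases i <;> simp [Function.update]

private lemma upd2 (a b c d e x : V) :
    Function.update ![a,b,c,d,e] (2 : Fin 5) x = ![a,b,x,d,e] := by
  funext i; fin_cases i <;> simp [Function.update]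

private lemma upd4 (a b c d e x : V) :
    Function.update ![a,b,c,d,e] (4 : Fin 5) x = ![a,b,c,d,x] := by
  funext i; fin_cases i <;> simp [Function.update]

private lemma exp0 (T : MultilinearMap ℝ (fun _ : Fin 5 => V) ℝ) (P Q b c d e : V) :
    T ![P+Q,b,c,d,e] = T ![P,b,c,d,e] + T ![Q,b,c,d,e] := by
  have h := T.map_update_add ![P,b,c,d,e] 0 P Q
  rwa [upd0, upd0, upd0] at h

private lemma exp2 (T : MultilinearMap ℝ (fun _ : Fin 5 => V) ℝ) (P Q a b d e : V) :
    T ![a,b,P+Q,d,e] = T ![a,b,P,d,e] + T ![a,b,Q,d,e] := by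
  have h := T.map_update_add ![a,b,P,d,e] 2 P Q
  rwa [upd2, upd2, upd2] at h

private lemma exp4 (T : MultilinearMap ℝ (fun _ : Fin 5 => V) ℝ) (P Q a b c d : V) :
    T ![a,b,c,d,P+Q] = T ![a,b,c,d,P] + T ![a,b,c,d,Q] := by
  have h := T.map_update_add ![a,b,c,d,P] 4 P Q
  rwa [upd4, upd4, upd4] at h

private lemma neg0 (T : MultilinearMap ℝ (fun _ : Fin 5 => V) ℝ) (a b c d e : V) :
    T ![-a,b,c,d,e] = - T ![a,b,c,d,e] := by
  have h := T.map_update_neg ![a,b,c,d,e] 0 a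
  rwa [upd0, upd0] at h

private lemma neg2 (T : MultilinearMap ℝ (fun _ : Fin 5 => V) ℝ) (a b c d e : V) :
    T ![a,b,-c,d,e] = - T ![a,b,c,d,e] := by
  have h := T.map_update_neg ![a,b,c,d,e] 2 c
  rwa [upd2, upd2] at h

private lemma neg4 (T : MultilinearMap ℝ (fun _ : Fin 5 => V) ℝ) (a b c d e : V) :
    T ![a,b,c,d,-e] = - T ![a,b,c,d,e] := by
  have h := T.map_update_neg ![a,b,c,d,e] 4 e
  rwa [upd4, upd4] at h

private lemma expand8 (T : MultilinearMap ℝ (fun _ : Fin 5 => V) ℝ) (P Q m : V) :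
    T ![P+Q, m, P+Q, m, P+Q]
      = T ![P,m,P,m,P] + T ![P,m,P,m,Q] + T ![P,m,Q,m,P] + T ![Q,m,P,m,P]
      + T ![P,m,Q,m,Q] + T ![Q,m,P,m,Q] + T ![Q,m,Q,m,P] + T ![Q,m,Q,m,Q] := by
  rw [exp4, exp2, exp2, exp0, exp0, exp0, exp0]; ring

/-- Polarization of the diagonal vanishing. -/
private lemma pol3 (T : MultilinearMap ℝ (fun _ : Fin 5 => V) ℝ)
    (hdiag : ∀ U V' : V, T ![U, V', U, V', U] = 0) (a m b : V) :
    T ![b,m,a,m,a] + T ![a,m,b,m,a] + T ![a,m,a,m,b] = 0 := by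
  have e1 := expand8 T a b m
  have e2 := expand8 T a (-b) m
  simp only [neg0, neg2, neg4] at e2
  have d1 := hdiag (a + b) m
  have d2 := hdiag (a + -b) m
  have d3 := hdiag a m
  have d4 := hdiag b m
  rw [e1] at d1
  rw [e2] at d2
  linarith

end aux

/-- under the ∇R symmetries, T(U,V,U,V,U)=0 forces T(U,V,U,V,W)=0. -/
theorem stmt4 {V : Type*} [AddCommGroup V] [Module ℝ V]
    (T : MultilinearMap ℝ (fun _ : Fin 5 => V) ℝ)
    (hskew : ∀ X Y Z W U : V, T ![X, Y, Z, W, U] = - T ![Y, X, Z, W, U])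
    (hpair : ∀ X Y Z W U : V, T ![X, Y, Z, W, U] = T ![Z, W, X, Y, U])
    (hb1 : ∀ X Y Z W U : V,
      T ![X, Y, Z, W, U] + T ![Y, Z, X, W, U] + T ![Z, X, Y, W, U] = 0)
    (hb2 : ∀ X Y Z W U : V,
      T ![X, Y, Z, W, U] + T ![X, Y, W, U, Z] + T ![X, Y, U, Z, W] = 0)
    (hdiag : ∀ U V' : V, T ![U, V', U, V', U] = 0) :
    ∀ U V' W : V, T ![U, V', U, V', W] = 0 := by
  intro U V' W
  have s1 := hskew U U V' V' W
  have s2 := hskew U U V' W V'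
  have s3 := hskew U V' V' U W
  have s4 := hskew U V' W U V'
  have p1 := hpair U U V' W V'
  have p2 := hpair U V' U W V'
  have p3 := hpair U V' V' U W
  have p4 := hpair U V' W U V'
  have p5 := hpair U V' W V' U
  have b1a := hb1 U U V' V' W
  have b1b := hb1 U U W V' V'
  have b1c := hb1 U V' W U V'
  have b2a := hb2 U U V' V' W
  have b2b := hb2 U V' U W V'
  have q1 := pol3 T hdiag V' U W
  have q2 := pol3 T hdiag U V' W
  linarith
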